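/- Let X and Y be independent identically distributed random vectors in ℝ^d with a common log-concave density f. Then h_∞(X − Y) = h_2(X); equivalently, the density f_{X−Y}(z) = ∫_{ℝ^d} f(z + x) f(x) dx of X − Y attains its supremum at z = 0, with sup_z f_{X−Y}(z) = f_{X−Y}(0) = ∫_{ℝ^d} f²(x) dx. -/

import Mathlib

open Real MeasureTheory

/-- `f` is a probability density on `ℝ^d`. -/
def IsDensity (d : ℕ) (f : (Fin d → ℝ) → ℝ) : Prop :=
  Measurable f ∧ (∀ x, 0 ≤ f x) ∧ ∫ x, f x = 1

/-- `f` is log-concave: `f((1−t)x + ty) ≥ f(x)^{1−t} f(y)^t`. -/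
def IsLogConcaveDensity (d : ℕ) (f : (Fin d → ℝ) → ℝ) : Prop :=
  ∀ x y : Fin d → ℝ, ∀ t ∈ Set.Ioo (0 : ℝ) 1,
    f x ^ (1 - t) * f y ^ t ≤ f ((1 - t) • x + t • y)

section aux
variable {d : ℕ} {f : (Fin d → ℝ) → ℝ}

lemma key_pointwise (hf0 : ∀ x, 0 ≤ f x) (hlc : IsLogConcaveDensity d f) (z x : Fin d → ℝ) :
    f (z + x) * f x ≤ f (x + (2:ℝ)⁻¹ • z) ^ 2 := by
  have h := hlc x (z + x) (2⁻¹) ⟨by norm_num, by norm_num⟩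
  have hx : (1 - (2:ℝ)⁻¹) • x + (2:ℝ)⁻¹ • (z + x) = x + (2:ℝ)⁻¹ • z := by
    rw [smul_add]; module
  rw [hx] at h
  have h0 : (0:ℝ) ≤ f x ^ ((1:ℝ) - 2⁻¹) * f (z + x) ^ ((2:ℝ)⁻¹) :=
    mul_nonneg (Real.rpow_nonneg (hf0 x) _) (Real.rpow_nonneg (hf0 _) _)
  calc f (z + x) * f x
      = (f x ^ ((1:ℝ) - 2⁻¹) * f (z + x) ^ ((2:ℝ)⁻¹)) ^ 2 := by
        rw [mul_pow, ← Real.rpow_natCast (f x ^ ((1:ℝ)-2⁻¹)) 2,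
          ← Real.rpow_natCast (f (z+x) ^ ((2:ℝ)⁻¹)) 2,
          ← Real.rpow_mul (hf0 x), ← Real.rpow_mul (hf0 _)]
        norm_num
        rw [mul_comm]
    _ ≤ f (x + (2:ℝ)⁻¹ • z) ^ 2 := pow_le_pow_left₀ h0 h 2

lemma f_integrable (hf : IsDensity d f) : Integrable f := by
  by_contra hc
  have h := hf.2.2
  rw [integral_undef hc] at h
  exact one_ne_zero h.symm

lemma exists_pos_superlevel (hf : IsDensity d f) :
    ∃ ε : ℝ, 0 < ε ∧ 0 < volume {x | ε ≤ f x} ∧ volume {x | ε ≤ f x} < ⊤ := by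
  have hi := f_integrable hf
  by_contra hc
  push_neg at hc
  have hnull : ∀ n : ℕ, volume {x | 1/((n:ℝ)+1) ≤ f x} = 0 := by
    intro n
    have h1 : (0:ℝ) < 1/((n:ℝ)+1) := by positivity
    rcases eq_or_lt_of_le (zero_le : (0:ENNReal) ≤ volume {x | 1/((n:ℝ)+1) ≤ f x}) with h2 | h2
    · exact h2.symm
    · exact absurd (hi.measure_ge_lt_top h1) (not_lt.mpr (hc _ h1 h2))
  have hzero : f =ᵐ[volume] 0 := by
    rw [Filter.EventuallyEq, ae_iff]
    refine measure_mono_null ?_ (measure_iUnion_null hnull)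
    intro x hx
    have hpos : 0 < f x := lt_of_le_of_ne (hf.2.1 x) (Ne.symm hx)
    obtain ⟨n, hn⟩ := exists_nat_one_div_lt hpos
    exact Set.mem_iUnion.2 ⟨n, hn.le⟩
  have h0 : ∫ x, f x = 0 := by
    rw [integral_congr_ae hzero]; simp
  rw [hf.2.2] at h0
  exact one_ne_zero h0

lemma f_bounded (hf : IsDensity d f) (hlc : IsLogConcaveDensity d f) :
    ∃ M : ℝ, 0 < M ∧ ∀ x, f x ≤ M := by
  obtain ⟨ε, hε, hS0, hSt⟩ := exists_pos_superlevel hf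
  set S := {x | ε ≤ f x} with hSdef
  have hSm : MeasurableSet S := hf.1 measurableSet_Ici
  set m := (volume S).toReal with hm
  have hm0 : 0 < m := ENNReal.toReal_pos hS0.ne' hSt.ne
  set c : ℝ := ((2:ℝ)^d)⁻¹ * m with hcdef
  have hc0 : 0 < c := by positivity
  set R : ℝ := (ε ^ ((2:ℝ)⁻¹) * c)⁻¹ with hRdef
  have hR0 : 0 < R := by
    rw [hRdef]; exact inv_pos.mpr (mul_pos (Real.rpow_pos_of_pos hε _) hc0)
  refine ⟨R ^ 2, by positivity, fun x₀ => ?_⟩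
  set T : Set (Fin d → ℝ) := (fun y => (2:ℝ) • y - x₀) ⁻¹' S with hTdef
  have hmeasmap : Measurable fun y : Fin d → ℝ => (2:ℝ) • y - x₀ :=
    (measurable_id.const_smul (2:ℝ)).sub measurable_const
  have hTm : MeasurableSet T := hmeasmap hSm
  have hTvol : volume T = ENNReal.ofReal (((2:ℝ)^d)⁻¹) * volume S := by
    have h1 : T = ((2:ℝ) • ·) ⁻¹' ((fun u => u + (-x₀)) ⁻¹' S) := by
      ext y; simp [hTdef, sub_eq_add_neg]
    rw [h1, Measure.addHaar_preimage_smul volume (two_ne_zero) _ ,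
      measure_preimage_add_right]
    congr 2
    rw [Module.finrank_fin_fun]
    rw [abs_of_nonneg (by positivity)]
  have hTvol' : (volume T).toReal = c := by
    rw [hTvol, ENNReal.toReal_mul, ENNReal.toReal_ofReal (by positivity), hcdef, hm]
  have hTfin : volume T ≠ ⊤ := by
    rw [hTvol]
    exact ENNReal.mul_ne_top ENNReal.ofReal_ne_top hSt.ne
  have hlb : ∀ y ∈ T, ε ^ ((2:ℝ)⁻¹) * f x₀ ^ ((2:ℝ)⁻¹) ≤ f y := by
    intro y hy
    have hs : (2:ℝ) • y - x₀ ∈ S := hy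
    have hfs : ε ≤ f ((2:ℝ) • y - x₀) := hs
    have h := hlc ((2:ℝ) • y - x₀) x₀ (2⁻¹) ⟨by norm_num, by norm_num⟩
    have hy' : (1 - (2:ℝ)⁻¹) • ((2:ℝ) • y - x₀) + (2:ℝ)⁻¹ • x₀ = y := by
      module
    rw [hy'] at h
    refine le_trans ?_ h
    have h1 : ε ^ ((2:ℝ)⁻¹) ≤ f ((2:ℝ) • y - x₀) ^ ((1:ℝ) - 2⁻¹) := by
      norm_num
      exact Real.rpow_le_rpow hε.le hfs (by norm_num)
    exact mul_le_mul_of_nonneg_right h1 (Real.rpow_nonneg (hf.2.1 x₀) _)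
  -- integral lower bound
  have hint := f_integrable hf
  have h1 : (ε ^ ((2:ℝ)⁻¹) * f x₀ ^ ((2:ℝ)⁻¹)) * (volume T).toReal ≤ ∫ y in T, f y :=
    setIntegral_ge_of_const_le_real hTm hTfin hlb hint.integrableOn
  have h2 : ∫ y in T, f y ≤ ∫ y, f y :=
    setIntegral_le_integral hint (Filter.Eventually.of_forall hf.2.1)
  rw [hf.2.2] at h2
  rw [hTvol'] at h1
  have h3 : ε ^ ((2:ℝ)⁻¹) * f x₀ ^ ((2:ℝ)⁻¹) * c ≤ 1 := h1.trans h2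
  have h4 : f x₀ ^ ((2:ℝ)⁻¹) ≤ R := by
    have hac : (0:ℝ) < ε ^ ((2:ℝ)⁻¹) * c := mul_pos (Real.rpow_pos_of_pos hε _) hc0
    rw [hRdef]
    nlinarith [h3, hac, mul_inv_cancel₀ hac.ne', Real.rpow_nonneg (hf.2.1 x₀) ((2:ℝ)⁻¹)]
  calc f x₀ = (f x₀ ^ ((2:ℝ)⁻¹)) ^ 2 := by
        rw [← Real.rpow_natCast (f x₀ ^ ((2:ℝ)⁻¹)) 2, ← Real.rpow_mul (hf.2.1 x₀)]
        norm_num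
    _ ≤ R ^ 2 := pow_le_pow_left₀ (Real.rpow_nonneg (hf.2.1 x₀) _) h4 2


lemma f_sq_integrable (hf : IsDensity d f) (hlc : IsLogConcaveDensity d f) :
    Integrable (fun x => f x ^ 2) := by
  obtain ⟨M, hM, hMle⟩ := f_bounded hf hlc
  refine ((f_integrable hf).const_mul M).mono'
    ((hf.1.pow_const 2).aestronglyMeasurable) ?_
  filter_upwards with x
  rw [Real.norm_eq_abs, abs_of_nonneg (by positivity)]
  nlinarith [hf.2.1 x, hMle x]

lemma shift_sq_integrable (hf : IsDensity d f) (hlc : IsLogConcaveDensity d f)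
    (a : Fin d → ℝ) : Integrable (fun x => f (x + a) ^ 2) :=
  (f_sq_integrable hf hlc).comp_add_right a

lemma g_integrable (hf : IsDensity d f) (hlc : IsLogConcaveDensity d f) (z : Fin d → ℝ) :
    Integrable (fun x => f (z + x) * f x) := by
  refine (shift_sq_integrable hf hlc ((2:ℝ)⁻¹ • z)).mono'
    (((hf.1.comp (measurable_const_add z)).mul hf.1).aestronglyMeasurable) ?_
  filter_upwards with x
  rw [Real.norm_eq_abs, abs_of_nonneg (mul_nonneg (hf.2.1 _) (hf.2.1 _))]
  exact key_pointwise hf.2.1 hlc z x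

lemma g_le (hf : IsDensity d f) (hlc : IsLogConcaveDensity d f) (z : Fin d → ℝ) :
    ∫ x, f (z + x) * f x ≤ ∫ x, f x ^ 2 := by
  have h := integral_mono (g_integrable hf hlc z)
    (shift_sq_integrable hf hlc ((2:ℝ)⁻¹ • z)) (key_pointwise hf.2.1 hlc z)
  rwa [integral_add_right_eq_self (fun y => f y ^ 2) ((2:ℝ)⁻¹ • z)] at h


lemma ae_continuousAt (hf : IsDensity d f) (hlc : IsLogConcaveDensity d f) :
    ∀ᵐ x : Fin d → ℝ, ContinuousAt f x := by
  set K := {x : Fin d → ℝ | 0 < f x} with hK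
  have hKconv : Convex ℝ K := by
    intro x hx y hy a b ha hb hab
    rcases eq_or_lt_of_le ha with rfl | ha'
    · simpa [show b = 1 by linarith] using hy
    rcases eq_or_lt_of_le hb with rfl | hb'
    · simpa [show a = 1 by linarith] using hx
    have h := hlc x y b ⟨hb', by linarith⟩
    have hxa : a = 1 - b := by linarith
    subst hxa
    exact lt_of_lt_of_le (mul_pos (Real.rpow_pos_of_pos hx _) (Real.rpow_pos_of_pos hy _)) h
  have hconc : ConcaveOn ℝ K (fun y => Real.log (f y)) := by
    refine ⟨hKconv, ?_⟩
    intro x hx y hy a b ha hb hab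
    rcases eq_or_lt_of_le ha with rfl | ha'
    · simp [show b = 1 by linarith]
    rcases eq_or_lt_of_le hb with rfl | hb'
    · simp [show a = 1 by linarith]
    have h := hlc x y b ⟨hb', by linarith⟩
    have hxa : a = 1 - b := by linarith
    subst hxa
    calc (1 - b) * Real.log (f x) + b * Real.log (f y)
        = Real.log (f x ^ ((1:ℝ) - b) * f y ^ (b:ℝ)) := by
          rw [Real.log_mul (Real.rpow_pos_of_pos hx _).ne' (Real.rpow_pos_of_pos hy _).ne',
            Real.log_rpow hx, Real.log_rpow hy]
      _ ≤ Real.log (f ((1 - b) • x + b • y)) := by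
          apply Real.log_le_log
            (mul_pos (Real.rpow_pos_of_pos hx _) (Real.rpow_pos_of_pos hy _)) h
  have hfr : volume (frontier K) = 0 := hKconv.addHaar_frontier volume
  have hae : ∀ᵐ x : Fin d → ℝ, x ∉ frontier K := by
    rw [ae_iff]; simpa using hfr
  filter_upwards [hae] with x hx
  by_cases hxc : x ∈ closure K
  · have hxint : x ∈ interior K := by
      rcases not_and_or.mp (hx : ¬(x ∈ closure K ∧ x ∉ interior K)) with h | h
      · exact absurd hxc h
      · exact not_not.mp h
    have hlog : ContinuousAt (fun y => Real.log (f y)) x :=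
      (hconc.continuousOn_interior x hxint).continuousAt (isOpen_interior.mem_nhds hxint)
    have hexp : ContinuousAt (fun y => Real.exp (Real.log (f y))) x :=
      Real.continuous_exp.continuousAt.comp hlog
    apply hexp.congr
    filter_upwards [isOpen_interior.mem_nhds hxint] with y hy
    exact Real.exp_log (interior_subset hy : y ∈ K)
  · have hopen : (closure K)ᶜ ∈ nhds x := isClosed_closure.isOpen_compl.mem_nhds hxc
    have heq : (fun _ => (0:ℝ)) =ᶠ[nhds x] f := by
      filter_upwards [hopen] with y hy
      have h1 : ¬ 0 < f y := fun h => hy (subset_closure h)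
      linarith [hf.2.1 y]
    exact continuousAt_const.congr heq

end aux

/-- For iid `X, Y` with a common log-concave density `f` on `ℝ^d`, the density
`g(z) = ∫ f(z+x)f(x) dx` of `X − Y` attains its supremum at `z = 0`, with
`sup_z g(z) = g(0) = ∫ f²`; consequently `h_∞(X−Y) = h_2(X)`, i.e.
`−log ess sup g = −log ∫ f²`. -/
theorem minEntropy_difference_eq_collision (d : ℕ) (f : (Fin d → ℝ) → ℝ)
    (hf : IsDensity d f) (hlc : IsLogConcaveDensity d f) :
    (⨆ z : Fin d → ℝ, ∫ x, f (z + x) * f x) = (∫ x, f (0 + x) * f x) ∧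
    (∫ x, f (0 + x) * f x) = (∫ x, f x ^ 2) ∧
    -Real.log (essSup (fun z => ∫ x, f (z + x) * f x) volume) =
      -Real.log (∫ x, f x ^ 2) := by
  have hI := f_sq_integrable hf hlc
  have hgle := g_le hf hlc
  have hg0 : (∫ x, f (0 + x) * f x) = ∫ x, f x ^ 2 := by
    simp_rw [zero_add, ← pow_two]
  have hBdd : BddAbove (Set.range fun z : Fin d → ℝ => ∫ x, f (z + x) * f x) := by
    refine ⟨∫ x, f x ^ 2, ?_⟩
    rintro _ ⟨z, rfl⟩
    exact hgle z
  have hsup : (⨆ z : Fin d → ℝ, ∫ x, f (z + x) * f x) = ∫ x, f (0 + x) * f x := by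
    apply le_antisymm
    · exact ciSup_le fun z => (hgle z).trans_eq hg0.symm
    · exact le_ciSup hBdd 0
  refine ⟨hsup, hg0, ?_⟩
  have hvol : (volume : Measure (Fin d → ℝ)) ≠ 0 := by
    intro h
    have h2 := Metric.measure_ball_pos volume (0 : Fin d → ℝ) one_pos
    rw [h] at h2; simp at h2
  set g : (Fin d → ℝ) → ℝ := fun z => ∫ x, f (z + x) * f x with hgdef
  have hg_nonneg : ∀ z, 0 ≤ g z := fun z =>
    integral_nonneg fun x => mul_nonneg (hf.2.1 _) (hf.2.1 _)
  have hupper : essSup g volume ≤ ∫ x, f x ^ 2 := by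
    rw [essSup_eq_sInf]
    apply csInf_le
    · refine ⟨0, fun a ha => ?_⟩
      by_contra hlt
      push_neg at hlt
      have ha' : volume {z | a < g z} = 0 := ha
      have he : {z | a < g z} = Set.univ :=
        Set.eq_univ_of_forall fun z => lt_of_lt_of_le hlt (hg_nonneg z)
      rw [he] at ha'
      exact hvol (Measure.measure_univ_eq_zero.mp ha')
    · show volume {z | (∫ x, f x ^ 2) < g z} = 0
      have he : {z | (∫ x, f x ^ 2) < g z} = (∅ : Set (Fin d → ℝ)) :=
        Set.eq_empty_iff_forall_notMem.mpr fun z hz => absurd (hgle z) (not_le.mpr hz)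
      rw [he]
      exact measure_empty
  have hlower : (∫ x, f x ^ 2) ≤ essSup g volume := by
    by_contra hcon
    push_neg at hcon
    set I := ∫ x, f x ^ 2 with hIdef
    set xm := (essSup g volume + I)/2 with hxm
    have hbdd : Filter.IsBoundedUnder (· ≤ ·) (ae volume) g :=
      Filter.isBoundedUnder_of ⟨I, fun z => hgle z⟩
    have hlt : essSup g volume < xm := by rw [hxm]; linarith
    have hxmI : xm < I := by rw [hxm]; linarith
    have hae2 := ae_lt_of_essSup_lt hlt hbdd
    have hex : ∀ n : ℕ, ∃ z : Fin d → ℝ, dist z 0 < 1/((n:ℝ)+1) ∧ g z < xm := by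
      intro n
      have hball : 0 < volume (Metric.ball (0 : Fin d → ℝ) (1/((n:ℝ)+1))) :=
        Metric.measure_ball_pos volume _ (by positivity)
      rw [ae_iff] at hae2
      by_contra hno
      push_neg at hno
      have hsub : Metric.ball (0 : Fin d → ℝ) (1/((n:ℝ)+1)) ⊆ {z | ¬ g z < xm} := by
        intro u hu
        exact not_lt.mpr (hno u (by simpa [Metric.mem_ball] using hu))
      exact absurd (measure_mono_null hsub hae2) hball.ne'
    choose z hz1 hz2 using hex
    have hztend : Filter.Tendsto z Filter.atTop (nhds 0) := by
      rw [tendsto_iff_dist_tendsto_zero]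
      exact squeeze_zero (fun n => dist_nonneg) (fun n => (hz1 n).le)
        tendsto_one_div_add_atTop_nhds_zero_nat
    have hcont := ae_continuousAt hf hlc
    have hmeas : ∀ n : ℕ, Measurable fun x => ENNReal.ofReal (f (z n + x) * f x) :=
      fun n => ENNReal.measurable_ofReal.comp
        ((hf.1.comp (measurable_const_add (z n))).mul hf.1)
    have hfatou : ENNReal.ofReal I ≤ ENNReal.ofReal xm := by
      have e1 : ENNReal.ofReal I = ∫⁻ x, ENNReal.ofReal (f x ^ 2) :=
        ofReal_integral_eq_lintegral_ofReal hI
          (Filter.Eventually.of_forall fun x => by positivity)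
      have e2 : ∫⁻ x, ENNReal.ofReal (f x ^ 2)
          = ∫⁻ x, Filter.liminf (fun n => ENNReal.ofReal (f (z n + x) * f x)) Filter.atTop := by
        apply lintegral_congr_ae
        filter_upwards [hcont] with x hx
        have h1 : Filter.Tendsto (fun n => z n + x) Filter.atTop (nhds x) := by
          simpa using (hztend.add (tendsto_const_nhds (x := x)) :
            Filter.Tendsto (fun n => z n + x) Filter.atTop (nhds (0 + x)))
        have h2 : Filter.Tendsto (fun n => ENNReal.ofReal (f (z n + x) * f x)) Filter.atTop
            (nhds (ENNReal.ofReal (f x * f x))) :=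
          (ENNReal.continuous_ofReal.tendsto _).comp
            ((hx.tendsto.comp h1).mul tendsto_const_nhds)
        rw [h2.liminf_eq, ← pow_two]
      have e3 := lintegral_liminf_le (μ := volume) (u := Filter.atTop) hmeas
      have e4 : Filter.liminf (fun n => ∫⁻ x, ENNReal.ofReal (f (z n + x) * f x)) Filter.atTop
          ≤ ENNReal.ofReal xm := by
        refine Filter.liminf_le_of_frequently_le
          (Filter.Frequently.of_forall fun n => ?_) (by isBoundedDefault)
        have heq : ∫⁻ x, ENNReal.ofReal (f (z n + x) * f x) = ENNReal.ofReal (g (z n)) :=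
          (ofReal_integral_eq_lintegral_ofReal (g_integrable hf hlc (z n))
            (Filter.Eventually.of_forall fun x => mul_nonneg (hf.2.1 _) (hf.2.1 _))).symm
        rw [heq]
        exact ENNReal.ofReal_le_ofReal (hz2 n).le
      calc ENNReal.ofReal I = _ := e1
        _ = _ := e2
        _ ≤ _ := e3
        _ ≤ _ := e4
    have hxm0 : 0 ≤ xm := by
      have h0 : 0 ≤ essSup g volume := by
        haveI : (ae (volume : Measure (Fin d → ℝ))).NeBot := ae_neBot.mpr hvol
        show (0:ℝ) ≤ Filter.limsup g (ae volume)
        exact Filter.le_limsup_of_frequently_le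
          (Filter.Frequently.of_forall fun z => hg_nonneg z) hbdd
      have hI0 : 0 ≤ I := integral_nonneg fun x => by positivity
      rw [hxm]; linarith
    have hfin : I ≤ xm := (ENNReal.ofReal_le_ofReal_iff hxm0).mp hfatou
    linarith
  have hess : essSup g volume = ∫ x, f x ^ 2 := le_antisymm hupper hlower
  rw [hess]
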